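/- arXiv:2402.18250 — 2 statements merged into one kernel-verified Lean document; each statement's English description precedes it below -/
import Mathlib

section
/- There exists a perfect tree T ⊆ 2^{<ω} such that for every n < ω and every A ⊆ [T] with |A| ≥ 2^n, A shatters a subset of ω of size n. Consequently, every infinite subset of [T] has infinite string dimension. -/
open Cardinal

/-- `F` shatters `A` if every function `A → Bool` extends to an element of `F`. -/
def Shatters {X : Type*} (F : Set (X → Bool)) (A : Set X) : Prop :=
  ∀ g : X → Bool, ∃ f ∈ F, ∀ a ∈ A, f a = g a

/-- The string dimension of `F`: the least cardinal `δ` such that `F` shatters no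
set of cardinality `δ`. -/
noncomputable def sdim {X : Type*} (F : Set (X → Bool)) : Cardinal :=
  sInf {δ : Cardinal | ∀ A : Set X, #A = δ → ¬ Shatters F A}

/-- The cofinal branches of a tree `T ⊆ 2^{<ω}` (nodes coded as lists of booleans). -/
def branches (T : Set (List Bool)) : Set (ℕ → Bool) :=
  {x | ∀ n : ℕ, (List.ofFn fun i : Fin n => x i) ∈ T}


open Classical in
/-- the number `< 2^N` whose `u`-th bit is `φ u`, for `u < N`. -/
noncomputable def mask (N : ℕ) (φ : ℕ → Bool) : ℕ :=
  ∑ u ∈ Finset.range N, if φ u then 2^u else 0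

lemma mask_lt (N : ℕ) (φ : ℕ → Bool) : mask N φ < 2^N := by
  induction N with
  | zero => simp [mask]
  | succ N ih =>
    rw [mask, Finset.sum_range_succ, ← mask]
    have : (if φ N then 2^N else 0) ≤ 2^N := by split <;> simp
    calc mask N φ + (if φ N then 2^N else 0) < 2^N + 2^N := by omega
    _ = 2^(N+1) := by ring

lemma testBit_mask {N u : ℕ} (φ : ℕ → Bool) (h : u < N) : (mask N φ).testBit u = φ u := by
  induction N with
  | zero => omega
  | succ N ih =>
    rw [mask, Finset.sum_range_succ, ← mask]
    rcases Nat.lt_or_ge u N with hu | hu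
    · rcases hφ : φ N with _ | _
      · simpa using ih hu
      · rw [if_pos rfl]
        rw [Nat.add_comm, Nat.testBit_two_pow_add_gt hu, ih hu]
    · have hu' : u = N := by omega
      subst hu'
      rcases hφ : φ u with _ | _
      · simpa using Nat.testBit_lt_two_pow (mask_lt u φ)
      · rw [if_pos rfl]
        rw [Nat.add_comm, Nat.testBit_two_pow_add_eq,
          Nat.testBit_lt_two_pow (mask_lt u φ)]
        rfl

lemma mask_congr {N : ℕ} {φ ψ : ℕ → Bool} (h : ∀ i < N, φ i = ψ i) : mask N φ = mask N ψ :=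
  Finset.sum_congr rfl fun u hu => by rw [h u (Finset.mem_range.mp hu)]

/-- The coding map: branch `cmap y` records, at coordinate `Nat.pair k h`, the bit of `h`
at position `mask k y`, i.e. the value of the boolean function coded by `h` on `y ↾ k`. -/
noncomputable def cmap (y : ℕ → Bool) (m : ℕ) : Bool :=
  Nat.testBit m.unpair.2 (mask m.unpair.1 y)

lemma cmap_congr {m : ℕ} {y y' : ℕ → Bool} (h : ∀ i < m.unpair.1, y i = y' i) :
    cmap y m = cmap y' m := by
  unfold cmap; rw [mask_congr h]

/-- coordinate reading the `k`-th bit of `y`. -/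
noncomputable def rdP (k : ℕ) : ℕ := Nat.pair (k+1) (mask (2^(k+1)) fun u => u.testBit k)

lemma cmap_rdP (y : ℕ → Bool) (k : ℕ) : cmap y (rdP k) = y k := by
  unfold cmap rdP
  rw [Nat.unpair_pair]
  simp only
  rw [testBit_mask _ (mask_lt _ _), testBit_mask _ (by omega)]

/-- the tree of prefixes of branches `cmap y`. -/
noncomputable def Tr : Set (List Bool) :=
  {t | ∃ y : ℕ → Bool, ∀ (i : ℕ) (h : i < t.length), t[i] = cmap y i}

lemma recover {x : ℕ → Bool} (hx : x ∈ branches Tr) : ∃ y, ∀ m, x m = cmap y m := by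
  refine ⟨fun k => x (rdP k), fun m => ?_⟩
  set K := m.unpair.1 with hK
  set N := max (m+1) (((Finset.range K).sup rdP) + 1) with hN
  obtain ⟨y', hy'⟩ := hx N
  have hlen : (List.ofFn fun i : Fin N => x i).length = N := by simp
  have hread : ∀ i < N, x i = cmap y' i := by
    intro i hi
    have := hy' i (by omega)
    simpa using this
  have hyk : ∀ k < K, x (rdP k) = y' k := by
    intro k hk
    have hPk : rdP k < N := by
      have : rdP k ≤ (Finset.range K).sup rdP := Finset.le_sup (Finset.mem_range.mpr hk)
      omega
    rw [hread _ hPk, cmap_rdP]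
  have : cmap (fun k => x (rdP k)) m = cmap y' m := cmap_congr (fun i hi => hyk i hi)
  rw [this, ← hread m (by omega)]

lemma prefix_closed {t : List Bool} (ht : t ∈ Tr) {s : List Bool} (hst : s <+: t) : s ∈ Tr := by
  obtain ⟨y, hy⟩ := ht
  refine ⟨y, fun i hi => ?_⟩
  have hlen := hst.length_le
  rw [hst.getElem hi]
  exact hy i (by omega)

open Classical in
lemma perfect {s : List Bool} (hs : s ∈ Tr) :
    ∃ t : List Bool, s <+: t ∧ t ++ [false] ∈ Tr ∧ t ++ [true] ∈ Tr := by
  obtain ⟨y, hy⟩ := hs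
  set n := s.length with hn
  set y' := Function.update y n (!(y n)) with hy'def
  have hdiff : ∃ m, cmap y m ≠ cmap y' m := by
    refine ⟨rdP n, ?_⟩
    rw [cmap_rdP, cmap_rdP, hy'def, Function.update_self]
    cases y n <;> simp
  set q := Nat.find hdiff with hqdef
  have hq : cmap y q ≠ cmap y' q := Nat.find_spec hdiff
  have hqmin : ∀ m < q, cmap y m = cmap y' m := fun m hm => not_not.mp (Nat.find_min hdiff hm)
  have hagree : ∀ m < n, cmap y m = cmap y' m := by
    intro m hm
    refine cmap_congr fun i hi => ?_
    have h1 : i ≤ m := le_trans (le_of_lt hi) (Nat.unpair_left_le m)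
    rw [hy'def, Function.update_of_ne (by omega)]
  have hnq : n ≤ q := by
    by_contra hcon
    exact hq (hagree q (by omega))
  set t := List.ofFn (fun i : Fin q => cmap y i) with htdef
  have htlen : t.length = q := by simp [htdef]
  have htget : ∀ (i : ℕ) (h : i < q), t[i]'(by omega) = cmap y i := by
    intro i h
    simp [htdef]
  have hpre : s <+: t := by
    have htake : s = t.take n := by
      refine List.ext_getElem (by simp [htdef]; omega) ?_
      intro i h1 h2
      rw [List.getElem_take]
      rw [htget i (by omega), ← hy i h1]
    refine ⟨t.drop n, ?_⟩
    rw [htake, List.take_append_drop]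
  have hmem : ∀ z : ℕ → Bool, (∀ i < q, cmap y i = cmap z i) → t ++ [cmap z q] ∈ Tr := by
    intro z hz
    refine ⟨z, fun i hi => ?_⟩
    have hi' : i < q + 1 := by simpa [htlen] using hi
    rcases Nat.lt_or_ge i q with h | h
    · rw [List.getElem_append_left (by omega), htget i h, hz i h]
    · have : i = q := by omega
      subst this
      rw [List.getElem_append_right (by omega)]
      simp [htlen]
  have h1 : t ++ [cmap y q] ∈ Tr := hmem y (fun i _ => rfl)
  have h2 : t ++ [cmap y' q] ∈ Tr := hmem y' (fun i hi => hqmin i hi)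
  refine ⟨t, hpre, ?_, ?_⟩ <;> rcases hb : cmap y q with _ | _ <;>
    rcases hb' : cmap y' q with _ | _ <;>
    first
      | (exact hb ▸ h1)
      | (exact hb' ▸ h2)
      | (exact absurd (hb.trans hb'.symm) hq)

lemma mk_fun_bool (n : ℕ) : #(Fin n → Bool) = (2 : Cardinal) ^ n := by
  rw [← Cardinal.power_def, Cardinal.mk_bool, Cardinal.mk_fin, Cardinal.power_natCast]

open Classical in
lemma key (n : ℕ) (A : Set (ℕ → Bool)) (hA : ∀ x ∈ A, ∃ y, ∀ m, x m = cmap y m)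
    (hcard : (2 : Cardinal) ^ n ≤ #A) : ∃ S : Set ℕ, #S = n ∧ Shatters A S := by
  rw [← mk_fun_bool] at hcard
  obtain ⟨ι⟩ := Cardinal.le_def _ _ |>.mp hcard
  set x : (Fin n → Bool) → (ℕ → Bool) := fun v => (ι v : ℕ → Bool) with hxdef
  have hxA : ∀ v, x v ∈ A := fun v => (ι v).2
  have hxinj : Function.Injective x := fun v w h => ι.injective (Subtype.ext h)
  have hy' : ∀ v, ∃ y, ∀ m, x v m = cmap y m := fun v => hA (x v) (hxA v)
  set y : (Fin n → Bool) → (ℕ → Bool) := fun v => Classical.choose (hy' v) with hydef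
  have hy : ∀ v m, x v m = cmap (y v) m := fun v => Classical.choose_spec (hy' v)
  have hyinj : Function.Injective y := by
    intro v w h
    refine hxinj (funext fun m => ?_)
    rw [hy v m, hy w m, h]
  set d : ((Fin n → Bool) × (Fin n → Bool)) → ℕ := fun p =>
    if h : y p.1 = y p.2 then 0 else Classical.choose (Function.ne_iff.mp h) with hddef
  set k : ℕ := (Finset.univ.sup d) + 1 with hkdef
  have hk : ∀ v w, v ≠ w → ∃ i < k, y v i ≠ y w i := by
    intro v w hvw
    have hne : y v ≠ y w := fun h => hvw (hyinj h)
    refine ⟨d (v, w), ?_, ?_⟩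
    · have : d (v, w) ≤ Finset.univ.sup d := Finset.le_sup (Finset.mem_univ _)
      omega
    · have : d (v, w) = Classical.choose (Function.ne_iff.mp hne) := by
        rw [hddef]; exact dif_neg hne
      rw [this]
      exact Classical.choose_spec (Function.ne_iff.mp hne)
  have huinj : ∀ v w, mask k (y v) = mask k (y w) → v = w := by
    intro v w h
    by_contra hvw
    obtain ⟨i, hik, hi⟩ := hk v w hvw
    apply hi
    rw [← testBit_mask (y v) hik, ← testBit_mask (y w) hik, h]
  set h' : Fin n → ℕ := fun i =>
    mask (2^k) (fun m => if ∃ v, mask k (y v) = m ∧ v i = true then true else false) with h'def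
  have hbit : ∀ (v : Fin n → Bool) (i : Fin n), (h' i).testBit (mask k (y v)) = v i := by
    intro v i
    rw [h'def]
    simp only
    rw [testBit_mask _ (mask_lt k (y v))]
    split
    · next h =>
      obtain ⟨w, hw1, hw2⟩ := h
      rw [huinj w v hw1] at hw2
      exact hw2.symm
    · next h =>
      cases hv : v i
      · rfl
      · exact absurd ⟨v, rfl, hv⟩ h
  set p : Fin n → ℕ := fun i => Nat.pair k (h' i) with hpdef
  have hpx : ∀ v i, x v (p i) = v i := by
    intro v i
    rw [hy v (p i), hpdef]
    unfold cmap
    simp only [Nat.unpair_pair]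
    exact hbit v i
  have hpinj : Function.Injective p := by
    intro i j hij
    by_contra hne
    set v : Fin n → Bool := fun l => decide (l = i) with hvdef
    have h1 : x v (p i) = true := by rw [hpx]; simp [hvdef]
    have h2 : x v (p j) = false := by
      rw [hpx]; simp [hvdef]; exact fun h => hne h.symm
    rw [hij, h2] at h1
    exact Bool.false_ne_true h1
  refine ⟨Set.range p, ?_, ?_⟩
  · rw [Cardinal.mk_range_eq p hpinj, Cardinal.mk_fin]
  · intro g
    refine ⟨x (fun i => g (p i)), hxA _, ?_⟩
    rintro a ⟨i, rfl⟩
    rw [hpx]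

/-- There is a perfect tree `T ⊆ 2^{<ω}` such that every `A ⊆ [T]` with `|A| ≥ 2^n`
shatters a set of size `n`; consequently every infinite subset of `[T]` has infinite
string dimension. -/
theorem stmt12 :
    ∃ T : Set (List Bool),
      (∀ t ∈ T, ∀ s : List Bool, s <+: t → s ∈ T) ∧
      (∀ s ∈ T, ∃ t : List Bool, s <+: t ∧ t ++ [false] ∈ T ∧ t ++ [true] ∈ T) ∧
      (∀ (n : ℕ) (A : Set (ℕ → Bool)), A ⊆ branches T → (2 : Cardinal) ^ n ≤ #A →
        ∃ S : Set ℕ, #S = n ∧ Shatters A S) ∧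
      (∀ A : Set (ℕ → Bool), A ⊆ branches T → A.Infinite → ℵ₀ ≤ sdim A) := by
  refine ⟨Tr, fun t ht s hst => prefix_closed ht hst, fun s hs => perfect hs, ?_, ?_⟩
  · intro n A hsub hcard
    exact key n A (fun x hx => recover (hsub hx)) hcard
  · intro A hsub hinf
    have hA0 : ℵ₀ ≤ #A := by
      have := hinf.to_subtype
      exact Cardinal.aleph0_le_mk ↥A
    refine le_csInf ⟨2 ^ ℵ₀, fun A' hA' _ => ?_⟩ ?_
    · have h1 : #A' ≤ ℵ₀ := Cardinal.mk_le_aleph0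
      rw [hA'] at h1
      exact absurd h1 (not_le.mpr (Cardinal.cantor ℵ₀))
    · intro δ hδ
      by_contra hcon
      obtain ⟨n, rfl⟩ := Cardinal.lt_aleph0.mp (not_le.mp hcon)
      have hcard : (2 : Cardinal) ^ n ≤ #A := by
        refine le_trans ?_ hA0
        have : (2 : Cardinal) ^ n = ((2 ^ n : ℕ) : Cardinal) := by push_cast; rfl
        rw [this]
        exact le_of_lt (Cardinal.nat_lt_aleph0 _)
      obtain ⟨S, hS, hSh⟩ := key n A (fun x hx => recover (hsub hx)) hcard
      exact hδ S hS hSh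
end

section
/- 𝔰𝔡(ℵ₀,ℵ₀) = 2^{ℵ₀}: the least number of subsets of 2^ω, each of finite string dimension, needed to cover 2^ω equals the continuum. Moreover there is a perfect set X ⊆ 2^ω such that a subset of X has finite string dimension if and only if it is finite. -/
open Cardinal

/-- `𝔰𝔡(δ,κ)`: the least cardinality of a family of subsets of `2^κ`, each of string
dimension `< δ`, whose union is all of `2^κ`. -/
noncomputable def StringCov (δ κ : Cardinal.{0}) : Cardinal.{0} :=
  sInf {c : Cardinal | ∃ 𝒜 : Set (Set (Quotient.out κ → Bool)),
    #𝒜 = c ∧ (∀ F ∈ 𝒜, sdim F < δ) ∧ ⋃₀ 𝒜 = Set.univ}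

namespace SDAux

/-- Index type: pairs of a level `k` and a predicate on `2^k`. -/
abbrev I : Type := Σ k : ℕ, (Fin k → Bool) → Bool

instance : Infinite I :=
  Infinite.of_injective (fun k : ℕ => (⟨k, fun _ => false⟩ : I))
    (fun _ _ h => congrArg Sigma.fst h)

/-- The coding map: `phi u x` evaluates, at coordinate `⟨k, S⟩`, the predicate `S`
on the restriction of `x` to the first `k` coordinates. -/
def evalI (x : ℕ → Bool) (s : I) : Bool := s.2 (fun i => x i)

def phi {D : Type} (u : D ≃ I) (x : ℕ → Bool) : D → Bool :=
  fun d => evalI x (u d)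

lemma phi_symm {D : Type} (u : D ≃ I) (x : ℕ → Bool) (s : I) :
    phi u x (u.symm s) = evalI x s :=
  congrArg (evalI x) (u.apply_symm_apply s)

lemma phi_injective {D : Type} (u : D ≃ I) : Function.Injective (phi u) := by
  intro x y h
  funext m
  have h2 := congrFun h (u.symm ⟨m + 1, fun σ => σ ⟨m, Nat.lt_succ_self m⟩⟩)
  rw [phi_symm, phi_symm] at h2
  exact h2

lemma shatters_of_infinite {D : Type} (u : D ≃ I) {A : Set (D → Bool)}
    (hA : A ⊆ Set.range (phi u)) (hinf : A.Infinite) (n : ℕ) :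
    ∃ B : Set D, #B = (n : Cardinal) ∧ Shatters A B := by
  classical
  haveI := hinf.to_subtype
  have hle : #(Fin n → Bool) ≤ #A :=
    le_trans (le_of_lt (mk_lt_aleph0_iff.mpr inferInstance)) (aleph0_le_mk _)
  obtain ⟨emb⟩ := (Cardinal.le_def _ _).mp hle
  have hx : ∀ v : Fin n → Bool, ∃ x0, phi u x0 = ((emb v : ↥A) : D → Bool) :=
    fun v => hA (emb v).2
  choose x hxs using hx
  have hxinj : Function.Injective x := by
    intro v w h
    apply emb.injective
    apply Subtype.ext
    rw [← hxs v, ← hxs w, h]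
  -- find a level at which all the chosen reals differ
  have hmx : ∀ p : (Fin n → Bool) × (Fin n → Bool),
      ∃ mm : ℕ, p.1 ≠ p.2 → x p.1 mm ≠ x p.2 mm := by
    intro p
    by_cases h : p.1 = p.2
    · exact ⟨0, fun hc => absurd h hc⟩
    · obtain ⟨mm, hmm⟩ := Function.ne_iff.mp (fun hh => h (hxinj hh))
      exact ⟨mm, fun _ => hmm⟩
  choose m hm using hmx
  have hkex : ∃ k : ℕ,
      Function.Injective (fun (v : Fin n → Bool) (i : Fin k) => x v i.1) := by
    refine ⟨(Finset.univ.sup m) + 1, ?_⟩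
    intro v w h
    by_contra hvw
    have hmk : m (v, w) < Finset.univ.sup m + 1 :=
      Nat.lt_succ_of_le (Finset.le_sup (Finset.mem_univ (v, w)))
    exact hm (v, w) hvw (congrFun h ⟨m (v, w), hmk⟩)
  obtain ⟨k, hrinj⟩ := hkex
  -- the predicates
  have hSx : ∀ j : Fin n, ∃ S : (Fin k → Bool) → Bool,
      ∀ v : Fin n → Bool, S (fun i => x v i.1) = v j := by
    intro j
    refine ⟨fun σ => if h : ∃ v : Fin n → Bool, (fun i : Fin k => x v i.1) = σ
      then h.choose j else false, ?_⟩
    intro v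
    have hex : ∃ w : Fin n → Bool, (fun i : Fin k => x w i.1) = (fun i : Fin k => x v i.1) :=
      ⟨v, rfl⟩
    have hch : hex.choose = v := hrinj hex.choose_spec
    show (if h : ∃ w : Fin n → Bool, (fun i : Fin k => x w i.1) = (fun i : Fin k => x v i.1)
      then h.choose j else false) = v j
    rw [dif_pos hex, hch]
  choose S hS using hSx
  have hbinj : Function.Injective (fun j : Fin n => u.symm ⟨k, S j⟩) := by
    intro j j' h
    by_contra hjj
    have h2 : (⟨k, S j⟩ : I) = ⟨k, S j'⟩ := u.symm.injective h
    have h3 : S j = S j' := eq_of_heq (Sigma.mk.inj_iff.mp h2).2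
    have h4 := congrFun h3 (fun i : Fin k => x (fun t => decide (t = j)) i.1)
    rw [hS, hS] at h4
    simp at h4
    exact hjj h4.symm
  refine ⟨Set.range (fun j : Fin n => u.symm ⟨k, S j⟩), ?_, ?_⟩
  · rw [mk_range_eq _ hbinj]
    simp
  · intro g
    refine ⟨phi u (x (fun j => g (u.symm ⟨k, S j⟩))), ?_, ?_⟩
    · rw [hxs]; exact (emb _).2
    · rintro a ⟨j, rfl⟩
      rw [phi_symm]
      exact hS j _
end SDAux

open SDAux

lemma sdim_lt_aleph0_of_finite {X : Type*} {A : Set (X → Bool)} (hA : A.Finite) :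
    sdim A < ℵ₀ := by
  classical
  haveI := hA.to_subtype
  have hmem : ((Nat.card A + 1 : ℕ) : Cardinal) ∈
      {δ : Cardinal | ∀ B : Set X, #B = δ → ¬ Shatters A B} := by
    intro B hB hsh
    have hBfin : Finite B := mk_lt_aleph0_iff.mp (by rw [hB]; exact nat_lt_aleph0 _)
    have hBcard : Nat.card B = Nat.card A + 1 := by
      have h1 : Nat.card B = ((Nat.card A + 1 : ℕ) : Cardinal).toNat := by rw [← hB]; rfl
      rwa [toNat_natCast] at h1
    have hg : ∀ h : (↥B → Bool), ∃ f, f ∈ A ∧ ∀ b : ↥B, f b = h b := by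
      intro h
      obtain ⟨f, hf, hfa⟩ := hsh (fun m => if hm : m ∈ B then h ⟨m, hm⟩ else false)
      refine ⟨f, hf, fun b => ?_⟩
      have h2 := hfa b b.2
      rwa [dif_pos b.2] at h2
    choose f hfA hfeq using hg
    have hinj : Function.Injective f := by
      intro h h' hff
      funext b
      have h1 := hfeq h b
      have h2 := hfeq h' b
      rw [hff] at h1
      exact h1.symm.trans h2
    have hcard := Nat.card_le_card_of_injective
      (fun h : ↥B → Bool => (⟨f h, hfA h⟩ : ↥A))
      (fun h h' e => hinj (congrArg Subtype.val e))
    rw [Nat.card_fun, Nat.card_eq_fintype_card (α := Bool), Fintype.card_bool, hBcard] at hcard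
    have h5 := Nat.lt_two_pow_self (n := Nat.card A)
    have h6 : 2 ^ Nat.card ↥A ≤ 2 ^ (Nat.card ↥A + 1) :=
      Nat.pow_le_pow_right (by norm_num) (Nat.le_succ _)
    exact Nat.lt_irrefl _ (lt_of_lt_of_le (lt_of_lt_of_le h5 h6) hcard)
  calc sdim A ≤ _ := csInf_le (OrderBot.bddBelow _) hmem
    _ < ℵ₀ := nat_lt_aleph0 _

lemma succ_mem_sdim_set {X : Type*} [Countable X] (A : Set (X → Bool)) :
    Order.succ ℵ₀ ∈ {δ : Cardinal | ∀ B : Set X, #B = δ → ¬ Shatters A B} := by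
  intro B hB _
  exact (lt_of_le_of_lt mk_le_aleph0 (Order.lt_succ ℵ₀)).ne hB

lemma sdim_mono {X : Type*} [Countable X] {F F' : Set (X → Bool)} (h : F' ⊆ F) :
    sdim F' ≤ sdim F := by
  apply csInf_le_csInf (OrderBot.bddBelow _) ⟨_, succ_mem_sdim_set F⟩
  intro δ hδ B hB hsh
  refine hδ B hB ?_
  intro g
  obtain ⟨f, hf, hfa⟩ := hsh g
  exact ⟨f, h hf, hfa⟩

lemma aleph0_le_sdim {D : Type} (u : D ≃ SDAux.I) {A : Set (D → Bool)}
    (hA : A ⊆ Set.range (phi u)) (hinf : A.Infinite) : ℵ₀ ≤ sdim A := by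
  haveI : Countable D := Countable.of_equiv SDAux.I u.symm
  refine le_csInf ⟨_, succ_mem_sdim_set A⟩ ?_
  intro δ hδ
  by_contra hlt
  push_neg at hlt
  obtain ⟨n, rfl⟩ := lt_aleph0.mp hlt
  obtain ⟨B, hBc, hBs⟩ := shatters_of_infinite u hA hinf n
  exact hδ B hBc hBs

noncomputable def eI : ℕ ≃ SDAux.I :=
  Classical.choice (Cardinal.eq.mp (by rw [mk_nat, mk_eq_aleph0 SDAux.I]))

/-- `𝔰𝔡(ℵ₀,ℵ₀) = 2^{ℵ₀}`, and moreover there is a perfect set `X ⊆ 2^ω` in which the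
subsets of finite string dimension are exactly the finite subsets. -/
theorem stmt13 :
    StringCov ℵ₀ ℵ₀ = 2 ^ ℵ₀ ∧
    ∃ X : Set (ℕ → Bool), Perfect X ∧ ∀ A ⊆ X, (sdim A < ℵ₀ ↔ A.Finite) := by
  constructor
  · -- the covering number
    have hY : #(Quotient.out (ℵ₀ : Cardinal)) = ℵ₀ := mk_out _
    haveI : Countable (Quotient.out (ℵ₀ : Cardinal)) :=
      mk_le_aleph0_iff.mp (le_of_eq hY)
    set Y := Quotient.out (ℵ₀ : Cardinal) with hYdef
    obtain ⟨uY⟩ : Nonempty (Y ≃ SDAux.I) :=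
      Cardinal.eq.mp (hY.trans (mk_eq_aleph0 SDAux.I).symm)
    have harrow : #(Y → Bool) = 2 ^ (ℵ₀ : Cardinal) := by
      rw [← mk_bool, ← hY]; exact (power_def _ _).symm
    have hmem : (2 ^ ℵ₀ : Cardinal) ∈ {c : Cardinal | ∃ 𝒜 : Set (Set (Y → Bool)),
        #𝒜 = c ∧ (∀ F ∈ 𝒜, sdim F < ℵ₀) ∧ ⋃₀ 𝒜 = Set.univ} := by
      refine ⟨Set.range (fun f : Y → Bool => ({f} : Set (Y → Bool))), ?_, ?_, ?_⟩
      · rw [mk_range_eq _ (fun f g h => Set.singleton_eq_singleton_iff.mp h)]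
        exact harrow
      · rintro F ⟨f, rfl⟩
        exact sdim_lt_aleph0_of_finite (Set.finite_singleton f)
      · rw [Set.sUnion_range]
        exact Set.iUnion_of_singleton _
    have hlb : ∀ c ∈ {c : Cardinal | ∃ 𝒜 : Set (Set (Y → Bool)),
        #𝒜 = c ∧ (∀ F ∈ 𝒜, sdim F < ℵ₀) ∧ ⋃₀ 𝒜 = Set.univ},
        (2 ^ ℵ₀ : Cardinal) ≤ c := by
      rintro c ⟨𝒜, rfl, hsd, hcov⟩
      by_contra hlt
      push_neg at hlt
      have hX : #(Set.range (phi uY)) = 2 ^ (ℵ₀ : Cardinal) := by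
        rw [mk_range_eq _ (phi_injective uY), ← mk_bool, ← mk_nat]
        exact (power_def _ _).symm
      have hcover : Set.range (phi uY) ⊆
          ⋃ F : ↥𝒜, ((F : Set (Y → Bool)) ∩ Set.range (phi uY)) := by
        intro f hf
        have hmem2 : f ∈ ⋃₀ 𝒜 := by rw [hcov]; trivial
        obtain ⟨F, hF, hfF⟩ := hmem2
        exact Set.mem_iUnion.mpr ⟨⟨F, hF⟩, hfF, hf⟩
      have hle := (Cardinal.mk_le_mk_of_subset hcover).trans (mk_iUnion_le _)
      have hsup : (⨆ F : ↥𝒜, #((F : Set (Y → Bool)) ∩ Set.range (phi uY) : Set _)) ≤ ℵ₀ := by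
        rcases isEmpty_or_nonempty ↥𝒜 with hE | hNE
        · rw [ciSup_of_empty]; exact le_of_lt (lt_of_lt_of_le aleph0_pos.bot_lt le_rfl) |>.trans le_rfl
        · apply ciSup_le'
          intro F
          have hfin : ((F : Set (Y → Bool)) ∩ Set.range (phi uY)).Finite := by
            by_contra hinf
            have h1 : ℵ₀ ≤ sdim ((F : Set (Y → Bool)) ∩ Set.range (phi uY)) :=
              aleph0_le_sdim uY Set.inter_subset_right hinf
            have h2 : sdim ((F : Set (Y → Bool)) ∩ Set.range (phi uY)) ≤ sdim (F : Set (Y → Bool)) :=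
              sdim_mono Set.inter_subset_left
            exact absurd ((h1.trans h2).trans_lt (hsd F F.2)) (lt_irrefl ℵ₀)
          exact le_of_lt (lt_of_lt_of_le hfin.lt_aleph0 le_rfl)
      have hmul : #↥𝒜 * ℵ₀ < 2 ^ (ℵ₀ : Cardinal) :=
        Cardinal.mul_lt_of_lt (le_of_lt (cantor _)) hlt (cantor ℵ₀)
      have hfinal : (2 : Cardinal) ^ (ℵ₀ : Cardinal) ≤ #↥𝒜 * ℵ₀ := by
        calc (2 : Cardinal) ^ (ℵ₀ : Cardinal) = #(Set.range (phi uY)) := hX.symm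
          _ ≤ #↥𝒜 * ⨆ F : ↥𝒜, #((F : Set (Y → Bool)) ∩ Set.range (phi uY) : Set _) := hle
          _ ≤ #↥𝒜 * ℵ₀ := mul_le_mul_right hsup _
      exact absurd (hfinal.trans_lt hmul) (lt_irrefl _)
    unfold StringCov
    exact le_antisymm (csInf_le (OrderBot.bddBelow _) hmem) (le_csInf ⟨_, hmem⟩ hlb)
  · -- the perfect set
    refine ⟨Set.range (phi eI), ⟨?_, ?_⟩, ?_⟩
    · -- closed
      have hcont : Continuous (phi eI) := by
        apply continuous_pi
        intro d
        exact (continuous_of_discreteTopology).comp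
          (continuous_pi fun i : Fin (eI d).1 => continuous_apply (i : ℕ))
      exact (hcont.isClosedEmbedding (phi_injective eI)).isClosed_range
    · -- preperfect
      have hcont : Continuous (phi eI) := by
        apply continuous_pi
        intro d
        exact (continuous_of_discreteTopology).comp
          (continuous_pi fun i : Fin (eI d).1 => continuous_apply (i : ℕ))
      rintro y ⟨x, rfl⟩
      rw [accPt_iff_nhds]
      intro U hU
      have htd : Filter.Tendsto (fun m => Function.update x m (!x m)) Filter.atTop (nhds x) := by
        rw [tendsto_pi_nhds]
        intro nn
        apply Filter.Tendsto.congr' _ (tendsto_const_nhds (x := x nn))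
        filter_upwards [Filter.eventually_ge_atTop (nn + 1)] with m hm
        exact (Function.update_of_ne (by omega) _ _).symm
      have htd2 := ((hcont.tendsto x).comp htd)
      have hev : ∀ᶠ m in Filter.atTop, phi eI (Function.update x m (!x m)) ∈ U := htd2 hU
      obtain ⟨m, hm⟩ := hev.exists
      refine ⟨phi eI (Function.update x m (!x m)), ⟨hm, ⟨_, rfl⟩⟩, ?_⟩
      intro hcontra
      have hx2 := congrFun (phi_injective eI hcontra) m
      rw [Function.update_self] at hx2
      simp at hx2
    · intro A hA
      constructor
      · intro hlt
        by_contra hfin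
        exact absurd hlt (not_lt.mpr (aleph0_le_sdim eI hA hfin))
      · exact sdim_lt_aleph0_of_finite
end
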